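/- Let z₀ ∈ ℂ \ {0} and take the parameters κ_j = z₀^{2j+1}/(2j+1) for all j ≥ 1 in the definition of the polynomials θ_k. Then for every j ≥ 1 the 2×2 determinant with rows (θ₁(z₀), θ₀(z₀)) and (θ_{2j+1}(z₀), θ_{2j}(z₀)) vanishes, i.e. θ₁(z₀)·θ_{2j}(z₀) − θ₀(z₀)·θ_{2j+1}(z₀) = 0. -/

import Mathlib

open Complex Finset

noncomputable section

/-- Schur polynomials `S_k(x)`, defined by the generating identity
`∑_{k≥0} S_k(x) ε^k = exp (∑_{j≥1} x_j ε^j)`; equivalently (over `ℂ`, char 0) by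
`S_0 = 1` together with the recursion `(k+1)·S_{k+1} = ∑_{j=1}^{k+1} j·x_j·S_{k+1-j}`
obtained by differentiating the generating identity. -/
def schur (x : ℕ → ℂ) : ℕ → ℂ
  | 0 => 1
  | k + 1 => ((k : ℂ) + 1)⁻¹ *
      ∑ i ∈ Finset.range (k + 1), ((i : ℂ) + 1) * x (i + 1) * schur x (k - i)
  termination_by k => k
  decreasing_by omega

/-- The polynomials `θ_k(z)` with parameters `κ` (where `κ j` denotes `κ_j`), defined by
`∑_{k≥0} θ_k(z) ε^k = exp(zε + ∑_{j≥1} κ_j ε^{2j+1})`. -/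
def thetaAM (κ : ℕ → ℂ) (z : ℂ) : ℕ → ℂ :=
  schur fun m => if m = 1 then z else if m % 2 = 1 then κ ((m - 1) / 2) else 0

/-- The Adler–Moser polynomial `Θ_N(z) = c_N · det_{1≤i,j≤N}(θ_{2i-j}(z))`,
`c_N = ∏_{k=1}^N (2k-1)!!`, as a function of `z`. -/
def AM (κ : ℕ → ℂ) (N : ℕ) (z : ℂ) : ℂ :=
  (∏ k ∈ Finset.range N, ((2 * k + 1).doubleFactorial : ℂ)) *
    Matrix.det (Matrix.of fun i j : Fin N =>
      if (j : ℕ) + 1 ≤ 2 * ((i : ℕ) + 1) then thetaAM κ z (2 * ((i : ℕ) + 1) - ((j : ℕ) + 1))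
      else 0)

end

/-- **Proposition 1.** If `κ_j = z₀^{2j+1}/(2j+1)` for all `j ≥ 1` and `z₀ ≠ 0`, then
`θ₁(z₀)·θ_{2j}(z₀) − θ₀(z₀)·θ_{2j+1}(z₀) = 0` for every `j ≥ 1`. -/
theorem theta_two_by_two_det_vanishes
    (z₀ : ℂ) (hz₀ : z₀ ≠ 0) (κ : ℕ → ℂ)
    (hκ : ∀ j, 1 ≤ j → κ j = z₀ ^ (2 * j + 1) / (2 * j + 1)) :
    ∀ j, 1 ≤ j →
      thetaAM κ z₀ 1 * thetaAM κ z₀ (2 * j) - thetaAM κ z₀ 0 * thetaAM κ z₀ (2 * j + 1) = 0 := by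
  set x : ℕ → ℂ := fun m => if m = 1 then z₀ else if m % 2 = 1 then κ ((m - 1) / 2) else 0
    with hx
  set a : ℕ → ℂ := schur x with ha
  have hthet : thetaAM κ z₀ = a := rfl
  set w : ℕ → ℂ := fun i => if i % 2 = 0 then z₀ ^ (i + 1) else 0 with hw
  have hkey : ∀ i : ℕ, ((i : ℂ) + 1) * x (i + 1) = w i := by
    intro i
    rcases Nat.even_or_odd i with ⟨m, hm⟩ | ⟨m, hm⟩
    · subst hm
      rcases Nat.eq_zero_or_pos m with rfl | hm1
      · simp [hx, hw]
      · have h1 : ¬ (m + m + 1 = 1) := by omega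
        have h2 : (m + m + 1) % 2 = 1 := by omega
        have h3 : (m + m + 1 - 1) / 2 = m := by omega
        have h4 : (m + m) % 2 = 0 := by omega
        simp only [hx, hw, if_neg h1, h2, if_pos rfl, h3, h4]
        rw [hκ m hm1]
        have h6 : ((2 * m + 1 : ℕ) : ℂ) ≠ 0 := Nat.cast_ne_zero.mpr (by omega)
        have h7 : m + m + 1 = 2 * m + 1 := by omega
        rw [h7]
        push_cast at h6 ⊢
        field_simp
        linear_combination mul_inv_cancel₀ h6
    · subst hm
      have h1 : ¬ (2 * m + 1 + 1 = 1) := by omega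
      have h2 : ¬ ((2 * m + 1 + 1) % 2 = 1) := by omega
      have h3 : ¬ ((2 * m + 1) % 2 = 0) := by omega
      simp [hx, hw, if_neg h1, if_neg h2, if_neg h3]
  have hT : ∀ n : ℕ, ((n : ℂ) + 1) * a (n + 1) = ∑ i ∈ Finset.range (n + 1), w i * a (n - i) := by
    intro n
    have hdef : a (n + 1) = ((n : ℂ) + 1)⁻¹ *
        ∑ i ∈ Finset.range (n + 1), ((i : ℂ) + 1) * x (i + 1) * a (n - i) := by
      rw [ha, schur]
    rw [hdef, ← mul_assoc, mul_inv_cancel₀ (Nat.cast_add_one_ne_zero n), one_mul]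
    exact Finset.sum_congr rfl fun i _ => by rw [hkey]
  have hT' : ∀ k : ℕ, (k : ℂ) * a k = ∑ i ∈ Finset.range k, w i * a (k - 1 - i) := by
    intro k
    cases k with
    | zero => simp
    | succ n =>
      have h := hT n
      push_cast
      rw [h]
  have hw2 : ∀ i : ℕ, w (i + 2) = z₀ ^ 2 * w i := by
    intro i
    simp only [hw]
    have : (i + 2) % 2 = i % 2 := by omega
    rw [this]
    by_cases hp : i % 2 = 0
    · simp only [if_pos hp]; ring
    · simp [if_neg hp]
  have hR : ∀ k : ℕ, ((k : ℂ) + 2) * a (k + 2) = z₀ * a (k + 1) + z₀ ^ 2 * (k : ℂ) * a k := by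
    intro k
    have h := hT (k + 1)
    push_cast at h
    have e1 : (∑ i ∈ Finset.range (k + 1 + 1), w i * a (k + 1 - i))
        = (∑ i ∈ Finset.range (k + 1), w (i + 1) * a (k + 1 - (i + 1))) + w 0 * a (k + 1 - 0) :=
      Finset.sum_range_succ' _ _
    have e2 : (∑ i ∈ Finset.range (k + 1), w (i + 1) * a (k + 1 - (i + 1)))
        = (∑ i ∈ Finset.range k, w (i + 1 + 1) * a (k + 1 - (i + 1 + 1)))
          + w (0 + 1) * a (k + 1 - (0 + 1)) :=
      Finset.sum_range_succ' _ _
    have e3 : (∑ i ∈ Finset.range k, w (i + 1 + 1) * a (k + 1 - (i + 1 + 1)))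
        = z₀ ^ 2 * ∑ i ∈ Finset.range k, w i * a (k - 1 - i) := by
      rw [Finset.mul_sum]
      refine Finset.sum_congr rfl fun i _ => ?_
      have hi : i + 1 + 1 = i + 2 := rfl
      have hsub : k + 1 - (i + 1 + 1) = k - 1 - i := by omega
      rw [hi, hw2, hsub]
      ring
    have hw0 : w 0 = z₀ := by simp [hw]
    have hw1 : w (0 + 1) = 0 := by simp [hw]
    have hk2 : k + 1 + 1 = k + 2 := rfl
    rw [e1, e2, e3, hw0, hw1, ← hT', hk2] at h
    simp only [Nat.sub_zero] at h
    have hc : ((k : ℂ) + 1 + 1) = (k : ℂ) + 2 := by ring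
    rw [hc] at h
    rw [h]
    ring
  have ha0 : a 0 = 1 := by rw [ha, schur]
  have hP : ∀ j : ℕ, a (2 * j + 1) = z₀ * a (2 * j) := by
    intro j
    induction j with
    | zero =>
      have h := hT 0
      simp [hw, ha0] at h
      simpa [ha0] using h
    | succ n ih =>
      have e1 := hR (2 * n + 1)
      have e2 := hR (2 * n)
      have hi1 : 2 * n + 1 + 1 = 2 * n + 2 := rfl
      have hi2 : 2 * n + 1 + 2 = 2 * n + 3 := rfl
      rw [hi1, hi2] at e1
      push_cast at e1 e2 ih
      have key2 : (2 * (n : ℂ) + 2) * a (2 * n + 2) = z₀ ^ 2 * (2 * (n : ℂ) + 1) * a (2 * n) := by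
        linear_combination e2 + z₀ * ih
      have hne : (2 * (n : ℂ) + 3) ≠ 0 := by
        have h' : ((2 * n + 3 : ℕ) : ℂ) ≠ 0 := Nat.cast_ne_zero.mpr (by omega)
        push_cast at h'
        exact h'
      have h3 : (2 * (n : ℂ) + 3) * a (2 * n + 3) = (2 * (n : ℂ) + 3) * (z₀ * a (2 * n + 2)) := by
        linear_combination e1 + z₀ ^ 2 * (2 * (n : ℂ) + 1) * ih - z₀ * key2
      have goal' : a (2 * n + 3) = z₀ * a (2 * n + 2) := mul_left_cancel₀ hne h3
      have hidx1 : 2 * (n + 1) + 1 = 2 * n + 3 := by ring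
      have hidx2 : 2 * (n + 1) = 2 * n + 2 := by ring
      rw [hidx1, hidx2]
      exact goal'
  intro j hj
  have ha1 : a 1 = z₀ := by
    have := hP 0
    simpa [ha0] using this
  rw [hthet, ha0, ha1, hP j]
  ring
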